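/- The function h_A(sin x) ∏_{i=1}^k cos(x_i), where h_A is the Vandermonde determinant and sin is applied componentwise, is harmonic for the operator ½Δ + λ^{(A)} on W_A ∩ (−π/2,π/2)^k: that is, −½Δ [h_A(sin x) ∏_i cos x_i] = (½ Σ_{i=1}^k i²) · h_A(sin x) ∏_i cos x_i for all x in the open set. -/

import Mathlib

open Finset Real


/-- Pure frequency-`m` wave of the right parity. -/
noncomputable def ee (m : ℕ) : ℝ → ℝ :=
  fun t => if Odd m then Real.cos (m * t) else Real.sin (m * t)

/-- Derivative of `ee m`. -/
noncomputable def ed (m : ℕ) : ℝ → ℝ :=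
  fun t => if Odd m then -((m : ℝ) * Real.sin (m * t)) else (m : ℝ) * Real.cos (m * t)

lemma ee_zero : ee 0 = fun _ => 0 := by
  funext t; simp [ee]

lemma sin_mul_ee (m : ℕ) (t : ℝ) :
    Real.sin t * ee (m + 1) t = (-1 : ℝ) ^ m * (1 / 2) * (ee (m + 2) t - ee m t) := by
  have h2 : ((m : ℝ) + 2) * t = ((m : ℝ) + 1) * t + t := by ring
  have h0 : (m : ℝ) * t = ((m : ℝ) + 1) * t - t := by ring
  rcases Nat.even_or_odd m with hm | hm
  · have h1 : Odd (m + 1) := Even.add_one hm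
    have h4 : ¬ Odd m := by simpa [Nat.not_odd_iff_even] using hm
    have h3 : ¬ Odd (m + 2) := by rw [Nat.odd_iff] at *; omega
    rw [hm.neg_one_pow]
    simp only [ee, h1, h3, h4, if_true, if_false, if_neg h3, if_neg h4]
    push_cast
    rw [h2, h0, Real.sin_add, Real.sin_sub]
    ring
  · have h1 : ¬ Odd (m + 1) := by rw [Nat.odd_iff] at *; omega
    have h3 : Odd (m + 2) := by rw [Nat.odd_iff] at *; omega
    rw [hm.neg_one_pow]
    simp only [ee, h1, if_neg h1, if_pos h3, if_pos hm]
    push_cast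
    rw [h2, h0, Real.cos_add, Real.cos_sub]
    ring

lemma ee_hasDerivAt (m : ℕ) (t : ℝ) : HasDerivAt (ee m) (ed m t) t := by
  have hlin : HasDerivAt (fun s : ℝ => (m : ℝ) * s) (m : ℝ) t := by
    simpa using (hasDerivAt_id t).const_mul (m : ℝ)
  unfold ee ed
  by_cases hm : Odd m
  · simp only [if_pos hm]
    have h := (Real.hasDerivAt_cos ((m : ℝ) * t)).comp t hlin
    simp only [Function.comp_def] at h
    convert h using 1
    all_goals first | rfl | ring
  · simp only [if_neg hm]
    have h := (Real.hasDerivAt_sin ((m : ℝ) * t)).comp t hlin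
    simp only [Function.comp_def] at h
    convert h using 1
    all_goals first | rfl | ring

lemma ed_hasDerivAt (m : ℕ) (t : ℝ) : HasDerivAt (ed m) (-(m : ℝ) ^ 2 * ee m t) t := by
  have hlin : HasDerivAt (fun s : ℝ => (m : ℝ) * s) (m : ℝ) t := by
    simpa using (hasDerivAt_id t).const_mul (m : ℝ)
  unfold ee ed
  by_cases hm : Odd m
  · simp only [if_pos hm]
    have h := (((Real.hasDerivAt_sin ((m : ℝ) * t)).comp t hlin).const_mul (m : ℝ)).neg
    simp only [Function.comp_def] at h
    convert h using 1
    all_goals first | rfl | ring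
  · simp only [if_neg hm]
    have h := ((Real.hasDerivAt_cos ((m : ℝ) * t)).comp t hlin).const_mul (m : ℝ)
    simp only [Function.comp_def] at h
    convert h using 1
    all_goals first | rfl | ring

lemma sum_ee_deriv2 {ι : Type*} (S : Finset ι) (v : ι → ℝ) (f : ι → ℕ) (t : ℝ) :
    deriv (deriv (fun s => ∑ σ ∈ S, v σ * ee (f σ) s)) t
      = ∑ σ ∈ S, v σ * (-((f σ : ℝ)) ^ 2 * ee (f σ) t) := by
  have h1 : deriv (fun s => ∑ σ ∈ S, v σ * ee (f σ) s)
      = fun s => ∑ σ ∈ S, v σ * ed (f σ) s :=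
    funext fun s =>
      (HasDerivAt.fun_sum (fun σ _ => (ee_hasDerivAt (f σ) s).const_mul (v σ))).deriv
  rw [h1]
  exact (HasDerivAt.fun_sum (fun σ _ => (ed_hasDerivAt (f σ) t).const_mul (v σ))).deriv

lemma sinpow_mem_span (b : ℕ) :
    (fun t => Real.sin t ^ b * Real.cos t)
      ∈ Submodule.span ℝ (ee '' Set.Icc 1 (b + 1)) := by
  induction b with
  | zero =>
      have h : (fun t => Real.sin t ^ 0 * Real.cos t) = ee 1 := by
        funext t; simp [ee]
      rw [h]
      exact Submodule.subset_span ⟨1, by simp, rfl⟩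
  | succ b ih =>
      have key : ∀ g ∈ Submodule.span ℝ (ee '' Set.Icc 1 (b + 1)),
          (fun t => Real.sin t * g t) ∈ Submodule.span ℝ (ee '' Set.Icc 1 (b + 2)) := by
        intro g hg
        induction hg using Submodule.span_induction with
        | mem g hgmem =>
            obtain ⟨m, hm, rfl⟩ := hgmem
            simp only [Set.mem_Icc] at hm
            obtain ⟨m, rfl⟩ : ∃ m', m = m' + 1 := ⟨m - 1, by omega⟩
            have hfe : (fun t => Real.sin t * ee (m + 1) t)
                = ((-1 : ℝ) ^ m * (1 / 2)) • ee (m + 2)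
                  - ((-1 : ℝ) ^ m * (1 / 2)) • ee m := by
              funext t
              simp only [Pi.sub_apply, Pi.smul_apply, smul_eq_mul]
              rw [sin_mul_ee]
              ring
            rw [hfe]
            have h2 : ee (m + 2) ∈ Submodule.span ℝ (ee '' Set.Icc 1 (b + 2)) := by
              refine Submodule.subset_span ⟨m + 2, ?_, rfl⟩
              simp only [Set.mem_Icc]
              omega
            have h0 : ee m ∈ Submodule.span ℝ (ee '' Set.Icc 1 (b + 2)) := by
              rcases Nat.eq_zero_or_pos m with hm0 | hm0
              · subst hm0; rw [ee_zero]
                exact Submodule.zero_mem _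
              · refine Submodule.subset_span ⟨m, ?_, rfl⟩
                simp only [Set.mem_Icc]
                omega
            exact Submodule.sub_mem _ (Submodule.smul_mem _ _ h2) (Submodule.smul_mem _ _ h0)
        | zero =>
            have : (fun t => Real.sin t * (0 : ℝ → ℝ) t) = 0 := by funext t; simp
            rw [this]; exact Submodule.zero_mem _
        | add u v _ _ hu hv =>
            have : (fun t => Real.sin t * (u + v) t)
                = (fun t => Real.sin t * u t) + fun t => Real.sin t * v t := by
              funext t; simp [mul_add]
            rw [this]; exact Submodule.add_mem _ hu hv
        | smul a u _ hu =>
            have : (fun t => Real.sin t * (a • u) t) = a • fun t => Real.sin t * u t := by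
              funext t; simp [Pi.smul_apply, smul_eq_mul]; ring
            rw [this]; exact Submodule.smul_mem _ _ hu
      have h : (fun t => Real.sin t ^ (b + 1) * Real.cos t)
          = fun t => Real.sin t * (Real.sin t ^ b * Real.cos t) := by
        funext t; ring
      rw [h]
      exact key _ ih

lemma sinpow_mem_range (b n : ℕ) (hb : b < n) :
    (fun t => Real.sin t ^ b * Real.cos t)
      ∈ Submodule.span ℝ (Set.range fun m : Fin n => ee ((m : ℕ) + 1)) := by
  have h1 := sinpow_mem_span b
  have h2 : ee '' Set.Icc 1 (b + 1) ⊆ Set.range fun m : Fin n => ee ((m : ℕ) + 1) := by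
    rintro g ⟨m, hm, rfl⟩
    simp only [Set.mem_Icc] at hm
    refine ⟨⟨m - 1, by omega⟩, ?_⟩
    show ee (m - 1 + 1) = ee m
    have hm1 : m - 1 + 1 = m := by omega
    rw [hm1]
  exact Submodule.span_mono h2 h1

lemma sinpow_eq_sum (b n : ℕ) (hb : b < n) :
    ∃ c : Fin n → ℝ, ∀ t, Real.sin t ^ b * Real.cos t
      = ∑ m : Fin n, c m * ee ((m : ℕ) + 1) t := by
  obtain ⟨c, hc⟩ := (Submodule.mem_span_range_iff_exists_fun ℝ).mp (sinpow_mem_range b n hb)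
  refine ⟨c, fun t => ?_⟩
  have h := congrFun hc t
  simp only [Finset.sum_apply, Pi.smul_apply, smul_eq_mul] at h
  exact h.symm

open Matrix Equiv in
lemma F_eq (k : ℕ) (T : Fin k → Fin k → ℝ)
    (hT : ∀ b : Fin k, ∀ t : ℝ,
      Real.sin t ^ (b : ℕ) * Real.cos t = ∑ m : Fin k, T b m * ee ((m : ℕ) + 1) t)
    (y : Fin k → ℝ) :
    (∏ i : Fin k, ∏ j ∈ Finset.Ioi i, (Real.sin (y j) - Real.sin (y i)))
        * ∏ i : Fin k, Real.cos (y i)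
      = ∑ σ : Equiv.Perm (Fin k),
          (((Equiv.Perm.sign σ : ℤ) : ℝ) * Matrix.det (Matrix.of fun (m b : Fin k) => T b m))
            * ∏ i : Fin k, ee ((i : ℕ) + 1) (y (σ i)) := by
  classical
  have h1 : (∏ i : Fin k, ∏ j ∈ Finset.Ioi i, (Real.sin (y j) - Real.sin (y i)))
      = Matrix.det (Matrix.vandermonde fun i => Real.sin (y i)) :=
    (Matrix.det_vandermonde _).symm
  have h2 : (Matrix.diagonal fun i => Real.cos (y i)) * (Matrix.vandermonde fun i => Real.sin (y i))
      = (Matrix.of fun (a m : Fin k) => ee ((m : ℕ) + 1) (y a)) * (Matrix.of fun (m b : Fin k) => T b m) := by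
    ext a b
    rw [Matrix.diagonal_mul, Matrix.mul_apply]
    simp only [Matrix.vandermonde_apply, Matrix.of_apply]
    rw [mul_comm, hT b (y a)]
    exact Finset.sum_congr rfl fun m _ => by ring
  calc (∏ i : Fin k, ∏ j ∈ Finset.Ioi i, (Real.sin (y j) - Real.sin (y i)))
        * ∏ i : Fin k, Real.cos (y i)
      = Matrix.det ((Matrix.diagonal fun i => Real.cos (y i))
          * (Matrix.vandermonde fun i => Real.sin (y i))) := by
        rw [Matrix.det_mul, Matrix.det_diagonal, h1]; ring
    _ = Matrix.det (Matrix.of fun (a m : Fin k) => ee ((m : ℕ) + 1) (y a))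
          * Matrix.det (Matrix.of fun (m b : Fin k) => T b m) := by rw [h2, Matrix.det_mul]
    _ = _ := by
        rw [Matrix.det_apply', Finset.sum_mul]
        exact Finset.sum_congr rfl fun σ _ => by simp only [Matrix.of_apply]; ring

/-- The Laplacian of `f : ℝ^k → ℝ`, as the sum of second derivatives of the
one-dimensional coordinate slices. -/
noncomputable def lap {k : ℕ} (f : (Fin k → ℝ) → ℝ) (x : Fin k → ℝ) : ℝ :=
  ∑ i : Fin k, deriv (deriv (fun t => f (Function.update x i t))) (x i)

/-- `h_A(sin x) ∏_i cos x_i` is an eigenfunction: `-½Δ` applied to it equals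
`(½ Σ_{i=1}^k i²)` times it, on `W_A ∩ (-π/2, π/2)^k`. -/
theorem reduite_sine_eigenfunction (k : ℕ) (x : Fin k → ℝ)
    (hxW : ∀ i j : Fin k, i < j → x i < x j)
    (hxI : ∀ i, x i ∈ Set.Ioo (-(Real.pi / 2)) (Real.pi / 2)) :
    -(1 / 2 : ℝ) *
        lap (fun y => (∏ i : Fin k, ∏ j ∈ Finset.Ioi i,
            (Real.sin (y j) - Real.sin (y i))) * ∏ i : Fin k, Real.cos (y i)) x =
      ((1 / 2 : ℝ) * ∑ i : Fin k, (((i : ℕ) + 1 : ℝ)) ^ 2) *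
        ((∏ i : Fin k, ∏ j ∈ Finset.Ioi i, (Real.sin (x j) - Real.sin (x i))) *
          ∏ i : Fin k, Real.cos (x i)) := by
  classical
  have hexp : ∀ b : Fin k, ∃ c : Fin k → ℝ, ∀ t : ℝ,
      Real.sin t ^ (b : ℕ) * Real.cos t = ∑ m : Fin k, c m * ee ((m : ℕ) + 1) t :=
    fun b => sinpow_eq_sum (b : ℕ) k b.isLt
  choose T hT using hexp
  set F : (Fin k → ℝ) → ℝ := fun y => (∏ i : Fin k, ∏ j ∈ Finset.Ioi i,
      (Real.sin (y j) - Real.sin (y i))) * ∏ i : Fin k, Real.cos (y i) with hFdef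
  set D : ℝ := Matrix.det (Matrix.of fun (m b : Fin k) => T b m) with hDdef
  set w : Equiv.Perm (Fin k) → ℝ := fun σ => ((Equiv.Perm.sign σ : ℤ) : ℝ) * D with hw
  have hF : ∀ y, F y = ∑ σ : Equiv.Perm (Fin k),
      w σ * ∏ i : Fin k, ee ((i : ℕ) + 1) (y (σ i)) := fun y => F_eq k T hT y
  set P : Equiv.Perm (Fin k) → ℝ :=
    fun σ => ∏ i : Fin k, ee ((i : ℕ) + 1) (x (σ i)) with hP
  set C : Equiv.Perm (Fin k) → Fin k → ℝ :=
    fun σ i => ∏ a ∈ Finset.univ.erase (σ⁻¹ i), ee ((a : ℕ) + 1) (x (σ a)) with hC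
  have hslice : ∀ (i : Fin k) (t : ℝ), F (Function.update x i t)
      = ∑ σ : Equiv.Perm (Fin k),
          (w σ * C σ i) * ee ((((σ⁻¹ : Equiv.Perm (Fin k)) i : Fin k) : ℕ) + 1) t := by
    intro i t
    rw [hF]
    refine Finset.sum_congr rfl fun σ _ => ?_
    have hp : (∏ a : Fin k, ee ((a : ℕ) + 1) (Function.update x i t (σ a)))
        = ee ((((σ⁻¹ : Equiv.Perm (Fin k)) i : Fin k) : ℕ) + 1) t * C σ i := by
      rw [← Finset.mul_prod_erase Finset.univ _ (Finset.mem_univ ((σ⁻¹ : Equiv.Perm (Fin k)) i))]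
      congr 1
      · rw [show ∀ y, σ (σ⁻¹ y) = y from fun y => (Equiv.eq_symm_apply σ).mp rfl, Function.update_self]
      · refine Finset.prod_congr rfl fun a ha => ?_
        have hne : σ a ≠ i := by
          intro h
          exact (Finset.mem_erase.mp ha).1 (by rw [← h, show ∀ y, σ⁻¹ (σ y) = y from fun y => Equiv.Perm.inv_eq_iff_eq.mpr rfl])
        rw [Function.update_of_ne hne]
    rw [hp]; ring
  have hSsum : ∀ σ : Equiv.Perm (Fin k),
      (∑ i : Fin k, -((((σ⁻¹ : Equiv.Perm (Fin k)) i : Fin k) : ℕ) + 1 : ℝ) ^ 2)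
        = -(∑ i : Fin k, (((i : ℕ) + 1 : ℝ)) ^ 2) := by
    intro σ
    rw [← Finset.sum_neg_distrib]
    exact Equiv.sum_comp (σ⁻¹ : Equiv.Perm (Fin k)) (fun a : Fin k => -(((a : ℕ) + 1 : ℝ)) ^ 2)
  have hlap : lap F x = (-(∑ i : Fin k, (((i : ℕ) + 1 : ℝ)) ^ 2)) * F x := by
    unfold lap
    have hstep : ∀ i : Fin k, deriv (deriv fun t => F (Function.update x i t)) (x i)
        = ∑ σ : Equiv.Perm (Fin k), (w σ * C σ i) *
            (-(((((σ⁻¹ : Equiv.Perm (Fin k)) i : Fin k) : ℕ) + 1 : ℕ) : ℝ) ^ 2 *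
              ee ((((σ⁻¹ : Equiv.Perm (Fin k)) i : Fin k) : ℕ) + 1) (x i)) := by
      intro i
      have hfe : (fun t => F (Function.update x i t))
          = fun t => ∑ σ : Equiv.Perm (Fin k),
              (w σ * C σ i) * ee ((((σ⁻¹ : Equiv.Perm (Fin k)) i : Fin k) : ℕ) + 1) t :=
        funext (hslice i)
      rw [hfe]
      exact sum_ee_deriv2 Finset.univ _
        (fun σ => (((σ⁻¹ : Equiv.Perm (Fin k)) i : Fin k) : ℕ) + 1) (x i)
    calc ∑ i : Fin k, deriv (deriv fun t => F (Function.update x i t)) (x i)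
        = ∑ i : Fin k, ∑ σ : Equiv.Perm (Fin k), (w σ * C σ i) *
            (-(((((σ⁻¹ : Equiv.Perm (Fin k)) i : Fin k) : ℕ) + 1 : ℕ) : ℝ) ^ 2 *
              ee ((((σ⁻¹ : Equiv.Perm (Fin k)) i : Fin k) : ℕ) + 1) (x i)) :=
          Finset.sum_congr rfl fun i _ => hstep i
      _ = ∑ σ : Equiv.Perm (Fin k), ∑ i : Fin k,
            (-((((σ⁻¹ : Equiv.Perm (Fin k)) i : Fin k) : ℕ) + 1 : ℝ) ^ 2) * (w σ * P σ) := by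
          rw [Finset.sum_comm]
          refine Finset.sum_congr rfl fun σ _ => Finset.sum_congr rfl fun i _ => ?_
          have hPe : P σ
              = ee ((((σ⁻¹ : Equiv.Perm (Fin k)) i : Fin k) : ℕ) + 1) (x i) * C σ i := by
            show (∏ a : Fin k, ee ((a : ℕ) + 1) (x (σ a))) = _
            rw [← Finset.mul_prod_erase Finset.univ _
              (Finset.mem_univ ((σ⁻¹ : Equiv.Perm (Fin k)) i))]
            congr 2
            rw [show ∀ y, σ (σ⁻¹ y) = y from fun y => (Equiv.eq_symm_apply σ).mp rfl]
          rw [hPe]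
          push_cast
          ring
      _ = ∑ σ : Equiv.Perm (Fin k),
            (∑ i : Fin k, -((((σ⁻¹ : Equiv.Perm (Fin k)) i : Fin k) : ℕ) + 1 : ℝ) ^ 2)
              * (w σ * P σ) :=
          Finset.sum_congr rfl fun σ _ => (Finset.sum_mul _ _ _).symm
      _ = ∑ σ : Equiv.Perm (Fin k),
            (-(∑ i : Fin k, (((i : ℕ) + 1 : ℝ)) ^ 2)) * (w σ * P σ) :=
          Finset.sum_congr rfl fun σ _ => by rw [hSsum σ]
      _ = (-(∑ i : Fin k, (((i : ℕ) + 1 : ℝ)) ^ 2)) * ∑ σ : Equiv.Perm (Fin k), w σ * P σ :=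
          (Finset.mul_sum _ _ _).symm
      _ = (-(∑ i : Fin k, (((i : ℕ) + 1 : ℝ)) ^ 2)) * F x := by rw [← hF x]
  have hFx : F x = (∏ i : Fin k, ∏ j ∈ Finset.Ioi i, (Real.sin (x j) - Real.sin (x i))) *
      ∏ i : Fin k, Real.cos (x i) := rfl
  rw [hlap, hFx]
  ring
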